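/- Chevalley restriction for degree-3 symmetric tensors: the restriction map from O(n)-invariant symmetric trilinear forms on Sym(n,ℝ) to 𝔖ₙ-invariant symmetric trilinear forms on the diagonal subspace D (where 𝔖ₙ acts by permuting diagonal entries) is a linear isomorphism. -/

import Mathlib

open Matrix

/-- The submodule of symmetric `n × n` real matrices. -/
def symSubmodule (n : ℕ) : Submodule ℝ (Matrix (Fin n) (Fin n) ℝ) where
  carrier := {X | X.IsSymm}
  add_mem' := fun ha hb => ha.add hb
  zero_mem' := by simp [Matrix.IsSymm]
  smul_mem' := fun c X hX => hX.smul c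

/-- The type of symmetric `n × n` real matrices `Sym(n,ℝ)`. -/
abbrev SymMat (n : ℕ) := ↥(symSubmodule n)

/-- A map `V → V → V → ℝ` is a symmetric trilinear form if it is linear in the
first argument and fully symmetric. -/
def IsSymTrilinear {V : Type*} [AddCommGroup V] [Module ℝ V]
    (C : V → V → V → ℝ) : Prop :=
  (∀ y z : V, IsLinearMap ℝ fun x => C x y z) ∧
  (∀ x y z : V, C x y z = C y x z) ∧
  (∀ x y z : V, C x y z = C x z y)

/-- Conjugation `X ↦ A X Aᵀ` of a symmetric matrix is symmetric. -/
theorem conj_isSymm {n : ℕ} (A : Matrix (Fin n) (Fin n) ℝ)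
    (X : SymMat n) : (A * (X : Matrix (Fin n) (Fin n) ℝ) * Aᵀ).IsSymm := by
  have hX : (X : Matrix (Fin n) (Fin n) ℝ)ᵀ = (X : Matrix (Fin n) (Fin n) ℝ) := X.2
  unfold Matrix.IsSymm
  rw [Matrix.transpose_mul, Matrix.transpose_mul, Matrix.transpose_transpose,
    hX, Matrix.mul_assoc]

/-- The action of a matrix `A` on `Sym(n,ℝ)` by `X ↦ A X Aᵀ`. -/
def conjS {n : ℕ} (A : Matrix (Fin n) (Fin n) ℝ) (X : SymMat n) : SymMat n :=
  ⟨A * (X : Matrix (Fin n) (Fin n) ℝ) * Aᵀ, conj_isSymm A X⟩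

/-- `O(n)`-invariance of a trilinear form on `Sym(n,ℝ)`. -/
def IsOInvariant {n : ℕ} (C : SymMat n → SymMat n → SymMat n → ℝ) : Prop :=
  ∀ A : Matrix (Fin n) (Fin n) ℝ, A * Aᵀ = 1 →
    ∀ X Y Z : SymMat n, C (conjS A X) (conjS A Y) (conjS A Z) = C X Y Z

/-- A diagonal matrix, as an element of `Sym(n,ℝ)`. -/
def diagSym {n : ℕ} (a : Fin n → ℝ) : SymMat n :=
  ⟨Matrix.diagonal a, Matrix.isSymm_diagonal a⟩

/-- `𝔖ₙ`-invariance of a trilinear form on the diagonal subspace `D ≅ ℝⁿ`. -/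
def IsPermInvariant {n : ℕ} (C : (Fin n → ℝ) → (Fin n → ℝ) → (Fin n → ℝ) → ℝ) :
    Prop :=
  ∀ σ : Equiv.Perm (Fin n), ∀ a b c : Fin n → ℝ,
    C (a ∘ σ) (b ∘ σ) (c ∘ σ) = C a b c

namespace Chev

variable {V : Type*} [AddCommGroup V] [Module ℝ V]

theorem lin2 {C : V → V → V → ℝ} (h : IsSymTrilinear C) (x z : V) :
    IsLinearMap ℝ fun y => C x y z := by
  have := h.1 x z
  constructor <;> intros <;> simp only [h.2.1 x _ z] <;>
    [exact this.map_add _ _; exact this.map_smul _ _]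

theorem lin3 {C : V → V → V → ℝ} (h : IsSymTrilinear C) (x y : V) :
    IsLinearMap ℝ fun z => C x y z := by
  have := lin2 h x y
  constructor <;> intros <;> simp only [h.2.2 x y] <;>
    [exact this.map_add _ _; exact this.map_smul _ _]

theorem lin_sum {f : V → ℝ} (h : IsLinearMap ℝ f) {ι : Type*} (s : Finset ι)
    (g : ι → ℝ) (v : ι → V) : f (∑ i ∈ s, g i • v i) = ∑ i ∈ s, g i * f (v i) := by
  rw [show f = (IsLinearMap.mk' f h : V →ₗ[ℝ] ℝ) from rfl, map_sum]
  simp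

/-- polarization: a symmetric trilinear form with vanishing cubic form is zero -/
theorem cubic_zero {D : V → V → V → ℝ} (h : IsSymTrilinear D)
    (h0 : ∀ x, D x x x = 0) (x y z : V) : D x y z = 0 := by
  have a1 : ∀ p q u v : V, D (p + q) u v = D p u v + D q u v :=
    fun p q u v => (h.1 u v).map_add p q
  have a2 : ∀ u p q v : V, D u (p + q) v = D u p v + D u q v :=
    fun u p q v => (lin2 h u v).map_add p q
  have a3 : ∀ u v p q : V, D u v (p + q) = D u v p + D u v q :=
    fun u v p q => (lin3 h u v).map_add p q
  have n1 : ∀ p u v : V, D (-p) u v = - D p u v := fun p u v => (h.1 u v).map_neg p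
  have n2 : ∀ u p v : V, D u (-p) v = - D u p v := fun u p v => (lin2 h u v).map_neg p
  have n3 : ∀ u v p : V, D u v (-p) = - D u v p := fun u v p => (lin3 h u v).map_neg p
  have key : ∀ u w : V, D u u w = 0 := by
    intro u w
    have c1 : D u w u = D u u w := h.2.2 u w u
    have c2 : D w u u = D u u w := (h.2.1 w u u).trans c1
    have c3 : D w u w = D u w w := h.2.1 w u w
    have c4 : D w w u = D u w w := (h.2.2 w w u).trans c3
    have e1 : D (u + w) (u + w) (u + w)
        = D u u u + 3 * D u u w + 3 * D u w w + D w w w := by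
      simp only [a1, a2, a3, c1, c2, c3, c4]; ring
    have e2 : D (u + -w) (u + -w) (u + -w)
        = D u u u - 3 * D u u w + 3 * D u w w - D w w w := by
      simp only [a1, a2, a3, n1, n2, n3, c1, c2, c3, c4]; ring
    have h1 := h0 (u + w); have h2 := h0 (u + -w); have h3 := h0 u; have h4 := h0 w
    rw [e1] at h1; rw [e2] at h2; linarith
  have e3 : D (x + y) (x + y) z = D x x z + 2 * D x y z + D y y z := by
    simp only [a1, a2, h.2.1 y x z]; ring
  have hk := key (x + y) z
  rw [e3] at hk
  have k1 := key x z; have k2 := key y z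
  linarith

/-- standard basis vector of `ℝⁿ` -/
def bv (n : ℕ) (i : Fin n) : Fin n → ℝ := fun j => if i = j then 1 else 0

theorem expand {n : ℕ} {C : (Fin n → ℝ) → (Fin n → ℝ) → (Fin n → ℝ) → ℝ}
    (h : IsSymTrilinear C) (a b c : Fin n → ℝ) :
    C a b c = ∑ i, ∑ j, ∑ k, a i * b j * c k * C (bv n i) (bv n j) (bv n k) := by
  have ha : a = ∑ i, a i • bv n i := pi_eq_sum_univ a
  have hb : b = ∑ j, b j • bv n j := pi_eq_sum_univ b
  have hc : c = ∑ k, c k • bv n k := pi_eq_sum_univ c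
  calc C a b c = C (∑ i, a i • bv n i) b c := by rw [← ha]
    _ = ∑ i, a i * C (bv n i) b c := lin_sum (h.1 b c) _ _ _
    _ = _ := by
        refine Finset.sum_congr rfl fun i _ => ?_
        calc a i * C (bv n i) b c
            = a i * C (bv n i) (∑ j, b j • bv n j) c := by rw [← hb]
          _ = a i * ∑ j, b j * C (bv n i) (bv n j) c := by
              rw [lin_sum (lin2 h _ _)]
          _ = _ := by
              rw [Finset.mul_sum]
              refine Finset.sum_congr rfl fun j _ => ?_
              calc a i * (b j * C (bv n i) (bv n j) c)
                  = a i * (b j * C (bv n i) (bv n j) (∑ k, c k • bv n k)) := by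
                    rw [← hc]
                _ = a i * (b j * ∑ k, c k * C (bv n i) (bv n j) (bv n k)) := by
                    rw [lin_sum (lin3 h _ _)]
                _ = _ := by
                    simp only [Finset.mul_sum]
                    exact Finset.sum_congr rfl fun k _ => by ring

section TraceLemmas

variable {n : ℕ}

theorem tr_rev {P Q R : Matrix (Fin n) (Fin n) ℝ} (hP : P.IsSymm) (hQ : Q.IsSymm)
    (hR : R.IsSymm) : (P * Q * R).trace = (R * Q * P).trace := by
  rw [← Matrix.trace_transpose (P * Q * R), Matrix.transpose_mul, Matrix.transpose_mul,
    hP.eq, hQ.eq, hR.eq, Matrix.mul_assoc]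

theorem tr_swap12 {P Q R : Matrix (Fin n) (Fin n) ℝ} (hP : P.IsSymm) (hQ : Q.IsSymm)
    (hR : R.IsSymm) : (Q * P * R).trace = (P * Q * R).trace := by
  rw [Matrix.trace_mul_cycle, tr_rev hR hQ hP]

theorem tr_swap23 {P Q R : Matrix (Fin n) (Fin n) ℝ} (hP : P.IsSymm) (hQ : Q.IsSymm)
    (hR : R.IsSymm) : (P * R * Q).trace = (P * Q * R).trace := by
  rw [tr_rev hP hR hQ, Matrix.trace_mul_cycle]

theorem tr_conj {A : Matrix (Fin n) (Fin n) ℝ} (hA : Aᵀ * A = 1)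
    (M : Matrix (Fin n) (Fin n) ℝ) : (A * M * Aᵀ).trace = M.trace := by
  rw [Matrix.trace_mul_cycle, hA, Matrix.one_mul]

theorem conj_mul {A : Matrix (Fin n) (Fin n) ℝ} (hA : Aᵀ * A = 1)
    (M N : Matrix (Fin n) (Fin n) ℝ) :
    (A * M * Aᵀ) * (A * N * Aᵀ) = A * (M * N) * Aᵀ := by
  have h2 : ∀ W : Matrix (Fin n) (Fin n) ℝ, Aᵀ * (A * W) = W := fun W => by
    rw [← Matrix.mul_assoc, hA, Matrix.one_mul]
  simp only [Matrix.mul_assoc, h2]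

end TraceLemmas

section Main

variable {n : ℕ} (C' : (Fin n → ℝ) → (Fin n → ℝ) → (Fin n → ℝ) → ℝ)

/-- value of `C'` on `(e_i, e_i, e_i)` -/
noncomputable def coA : ℝ :=
  if h : 0 < n then C' (bv n ⟨0, h⟩) (bv n ⟨0, h⟩) (bv n ⟨0, h⟩) else 0

/-- value of `C'` on `(e_i, e_i, e_k)`, `i ≠ k` -/
noncomputable def coB : ℝ :=
  if h : 1 < n then
    C' (bv n ⟨0, by omega⟩) (bv n ⟨0, by omega⟩) (bv n ⟨1, h⟩) else 0

/-- value of `C'` on `(e_i, e_j, e_k)`, distinct -/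
noncomputable def coC : ℝ :=
  if h : 2 < n then
    C' (bv n ⟨0, by omega⟩) (bv n ⟨1, by omega⟩) (bv n ⟨2, h⟩) else 0

/-- The candidate invariant form upstairs, a combination of
`tr(XYZ)`, `tr(XY)tr(Z) + ...`, `tr(X)tr(Y)tr(Z)`. -/
noncomputable def bigC : SymMat n → SymMat n → SymMat n → ℝ := fun X Y Z =>
  (coA C' - 3 * coB C' + 2 * coC C') *
      ((X : Matrix (Fin n) (Fin n) ℝ) * Y * Z).trace
    + (coB C' - coC C') *
      (((X : Matrix (Fin n) (Fin n) ℝ) * Y).trace * (Z : Matrix (Fin n) (Fin n) ℝ).trace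
        + ((Y : Matrix (Fin n) (Fin n) ℝ) * Z).trace * (X : Matrix (Fin n) (Fin n) ℝ).trace
        + ((Z : Matrix (Fin n) (Fin n) ℝ) * X).trace * (Y : Matrix (Fin n) (Fin n) ℝ).trace)
    + coC C' * ((X : Matrix (Fin n) (Fin n) ℝ).trace * (Y : Matrix (Fin n) (Fin n) ℝ).trace
        * (Z : Matrix (Fin n) (Fin n) ℝ).trace)

theorem bigC_tri : IsSymTrilinear (bigC (n := n) C') := by
  refine ⟨fun Y Z => ⟨fun X X' => ?_, fun c X => ?_⟩, fun X Y Z => ?_, fun X Y Z => ?_⟩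
  · show bigC C' (X + X') Y Z = bigC C' X Y Z + bigC C' X' Y Z
    simp only [bigC, Submodule.coe_add, Matrix.add_mul, Matrix.mul_add, Matrix.trace_add]
    ring
  · show bigC C' (c • X) Y Z = c * bigC C' X Y Z
    simp only [bigC, SetLike.val_smul, Matrix.smul_mul, Matrix.mul_smul, Matrix.trace_smul, smul_eq_mul]
    ring
  · show bigC C' X Y Z = bigC C' Y X Z
    have h1 : ((Y : Matrix (Fin n) (Fin n) ℝ) * X * Z).trace
        = ((X : Matrix (Fin n) (Fin n) ℝ) * Y * Z).trace := tr_swap12 X.2 Y.2 Z.2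
    simp only [bigC, h1, Matrix.trace_mul_comm (Y : Matrix (Fin n) (Fin n) ℝ) (X : Matrix (Fin n) (Fin n) ℝ)]
    rw [Matrix.trace_mul_comm (X : Matrix (Fin n) (Fin n) ℝ) (Z : Matrix (Fin n) (Fin n) ℝ),
      Matrix.trace_mul_comm (Z : Matrix (Fin n) (Fin n) ℝ) (Y : Matrix (Fin n) (Fin n) ℝ)]
    ring
  · show bigC C' X Y Z = bigC C' X Z Y  -- swap23
    have h1 : ((X : Matrix (Fin n) (Fin n) ℝ) * Z * Y).trace
        = ((X : Matrix (Fin n) (Fin n) ℝ) * Y * Z).trace := tr_swap23 X.2 Y.2 Z.2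
    simp only [bigC, h1]
    rw [Matrix.trace_mul_comm (X : Matrix (Fin n) (Fin n) ℝ) (Z : Matrix (Fin n) (Fin n) ℝ),
      Matrix.trace_mul_comm (Z : Matrix (Fin n) (Fin n) ℝ) (Y : Matrix (Fin n) (Fin n) ℝ),
      Matrix.trace_mul_comm (Y : Matrix (Fin n) (Fin n) ℝ) (X : Matrix (Fin n) (Fin n) ℝ)]
    ring

theorem bigC_inv : IsOInvariant (bigC (n := n) C') := by
  intro A hA X Y Z
  have h' : Aᵀ * A = 1 := mul_eq_one_comm.mp hA
  show bigC C' ⟨_, _⟩ ⟨_, _⟩ ⟨_, _⟩ = bigC C' X Y Z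
  simp only [bigC, conjS]
  rw [conj_mul h', conj_mul h', conj_mul h', conj_mul h',
    tr_conj h', tr_conj h', tr_conj h', tr_conj h', tr_conj h', tr_conj h', tr_conj h']

theorem spectral (X : SymMat n) :
    ∃ (A : Matrix (Fin n) (Fin n) ℝ) (d : Fin n → ℝ),
      A * Aᵀ = 1 ∧ X = conjS A (diagSym d) := by
  have hH : (X : Matrix (Fin n) (Fin n) ℝ).IsHermitian := by
    rw [Matrix.IsHermitian, Matrix.conjTranspose_eq_transpose_of_trivial]
    exact X.2
  refine ⟨(hH.eigenvectorUnitary : Matrix (Fin n) (Fin n) ℝ), hH.eigenvalues, ?_, ?_⟩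
  · have h := (Matrix.mem_unitaryGroup_iff).mp hH.eigenvectorUnitary.2
    rwa [Matrix.star_eq_conjTranspose, Matrix.conjTranspose_eq_transpose_of_trivial] at h
  · apply Subtype.ext
    have h := hH.spectral_theorem
    rw [Unitary.conjStarAlgAut_apply, Matrix.star_eq_conjTranspose, Matrix.conjTranspose_eq_transpose_of_trivial] at h
    show (X : Matrix (Fin n) (Fin n) ℝ) = _ * _ * _ᵀ
    exact h

end Main

section Comb

variable {n : ℕ} {C' : (Fin n → ℝ) → (Fin n → ℝ) → (Fin n → ℝ) → ℝ}

theorem bv_comp (σ : Equiv.Perm (Fin n)) (i : Fin n) :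
    bv n i ∘ σ = bv n (σ⁻¹ i) := by
  funext x
  by_cases h : σ⁻¹ i = x
  · subst h; simp [bv, Function.comp]
  · have h2 : i ≠ σ x := fun hh => h (by rw [hh]; simp)
    simp [bv, Function.comp, h, h2]; exact h

theorem T_perm (hC'inv : IsPermInvariant C') (τ : Equiv.Perm (Fin n)) (i j k : Fin n) :
    C' (bv n (τ i)) (bv n (τ j)) (bv n (τ k)) = C' (bv n i) (bv n j) (bv n k) := by
  have h := hC'inv τ (bv n (τ i)) (bv n (τ j)) (bv n (τ k))
  rw [bv_comp, bv_comp, bv_comp] at h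
  simpa using h.symm

theorem T_iii (hC'inv : IsPermInvariant C') (i : Fin n) :
    C' (bv n i) (bv n i) (bv n i) = coA C' := by
  have hn : 0 < n := i.pos
  unfold coA
  rw [dif_pos hn]
  have h := T_perm hC'inv (Equiv.swap (⟨0, hn⟩ : Fin n) i) ⟨0, hn⟩ ⟨0, hn⟩ ⟨0, hn⟩
  rw [Equiv.swap_apply_left] at h
  exact h

theorem T_pair (hC'inv : IsPermInvariant C') (i k : Fin n) (hik : i ≠ k) :
    C' (bv n i) (bv n i) (bv n k) = coB C' := by
  have h2 : 1 < n := by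
    rcases Nat.lt_or_ge 1 n with h | h
    · exact h
    · have hi := i.2; have hk := k.2
      exact absurd (Fin.ext (by omega : i.1 = k.1)) hik
  set z0 : Fin n := ⟨0, by omega⟩ with hz0
  set z1 : Fin n := ⟨1, h2⟩ with hz1
  have hz : z1 ≠ z0 := by simp [hz0, hz1, Fin.ext_iff]
  set τ₁ := Equiv.swap z0 i with hτ₁
  have hw : τ₁ z1 ≠ i := by
    rw [show i = τ₁ z0 from (Equiv.swap_apply_left z0 i).symm]
    exact τ₁.injective.ne hz
  set τ₂ := Equiv.swap (τ₁ z1) k with hτ₂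
  have h0 : (τ₁.trans τ₂) z0 = i := by
    simp only [Equiv.trans_apply, hτ₁, Equiv.swap_apply_left]
    exact Equiv.swap_apply_of_ne_of_ne (Ne.symm hw) hik
  have h1 : (τ₁.trans τ₂) z1 = k := by
    simp only [Equiv.trans_apply, hτ₂, Equiv.swap_apply_left]
  have h := T_perm hC'inv (τ₁.trans τ₂) z0 z0 z1
  rw [h0, h1] at h
  unfold coB
  rw [dif_pos h2]
  exact h

theorem T_dist (hC'inv : IsPermInvariant C') (i j k : Fin n)
    (hij : i ≠ j) (hik : i ≠ k) (hjk : j ≠ k) :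
    C' (bv n i) (bv n j) (bv n k) = coC C' := by
  have h3 : 2 < n := by
    rcases Nat.lt_or_ge 2 n with h | h
    · exact h
    · have hi := i.2; have hj := j.2; have hk := k.2
      have h1 : i.1 ≠ j.1 := fun hh => hij (Fin.ext hh)
      have h2' : i.1 ≠ k.1 := fun hh => hik (Fin.ext hh)
      have h3' : j.1 ≠ k.1 := fun hh => hjk (Fin.ext hh)
      omega
  set z0 : Fin n := ⟨0, by omega⟩ with hz0
  set z1 : Fin n := ⟨1, by omega⟩ with hz1
  set z2 : Fin n := ⟨2, h3⟩ with hz2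
  have hz01 : z1 ≠ z0 := by simp [hz0, hz1, Fin.ext_iff]
  have hz02 : z2 ≠ z0 := by simp [hz0, hz2, Fin.ext_iff]
  have hz12 : z1 ≠ z2 := by simp [hz1, hz2, Fin.ext_iff]
  set τ₁ := Equiv.swap z0 i with hτ₁
  have e0 : τ₁ z0 = i := Equiv.swap_apply_left z0 i
  have hw1i : τ₁ z1 ≠ i := by rw [← e0]; exact τ₁.injective.ne hz01
  have hw2i : τ₁ z2 ≠ i := by rw [← e0]; exact τ₁.injective.ne hz02
  have hw12 : τ₁ z1 ≠ τ₁ z2 := τ₁.injective.ne hz12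
  set τ₂ := Equiv.swap (τ₁ z1) j with hτ₂
  have fi : τ₂ i = i := Equiv.swap_apply_of_ne_of_ne (Ne.symm hw1i) hij
  have e1 : τ₂ (τ₁ z1) = j := Equiv.swap_apply_left _ _
  have hv_j : τ₂ (τ₁ z2) ≠ j := by rw [← e1]; exact τ₂.injective.ne (Ne.symm hw12)
  have hv_i : τ₂ (τ₁ z2) ≠ i := by rw [← fi]; exact τ₂.injective.ne hw2i
  set τ₃ := Equiv.swap (τ₂ (τ₁ z2)) k with hτ₃
  have gi : τ₃ i = i := Equiv.swap_apply_of_ne_of_ne (Ne.symm hv_i) hik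
  have gj : τ₃ j = j := Equiv.swap_apply_of_ne_of_ne (Ne.symm hv_j) hjk
  have e2 : τ₃ (τ₂ (τ₁ z2)) = k := Equiv.swap_apply_left _ _
  set τ := τ₁.trans (τ₂.trans τ₃) with hτ
  have h0 : τ z0 = i := by
    simp only [hτ, Equiv.trans_apply]; rw [e0, fi, gi]
  have h1 : τ z1 = j := by
    simp only [hτ, Equiv.trans_apply]; rw [e1, gj]
  have h2 : τ z2 = k := by
    simp only [hτ, Equiv.trans_apply]; rw [e2]
  have h := T_perm hC'inv τ z0 z1 z2
  rw [h0, h1, h2] at h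
  unfold coC
  rw [dif_pos h3]
  exact h

theorem bv_sum1 (i : Fin n) : ∑ l, bv n i l = 1 := by simp [bv]

theorem bv_sum2 (i j : Fin n) :
    ∑ l, bv n i l * bv n j l = if i = j then 1 else 0 := by
  have hpt : ∀ l, bv n i l * bv n j l = if i = l then bv n j l else 0 := by
    intro l; simp only [bv]; split <;> simp
  rw [Finset.sum_congr rfl fun l _ => hpt l, Finset.sum_ite_eq]
  simp [bv, eq_comm]

theorem bv_sum3 (i j k : Fin n) :
    ∑ l, bv n i l * bv n j l * bv n k l = if i = j ∧ j = k then 1 else 0 := by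
  have hpt : ∀ l, bv n i l * bv n j l * bv n k l
      = if i = l then bv n j l * bv n k l else 0 := by
    intro l; simp only [bv]; split <;> simp
  rw [Finset.sum_congr rfl fun l _ => hpt l, Finset.sum_ite_eq]
  simp only [Finset.mem_univ, if_true, bv]
  by_cases h1 : j = i
  · by_cases h2 : k = i
    · rw [if_pos h1, if_pos h2, if_pos ⟨h1.symm, h1.trans h2.symm⟩]; ring
    · rw [if_pos h1, if_neg h2,
        if_neg (fun hc : i = j ∧ j = k => h2 (hc.2.symm.trans h1))]
      ring
  · rw [if_neg h1, if_neg (fun hc : i = j ∧ j = k => h1 hc.1.symm)]; ring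

theorem key (hC'tri : IsSymTrilinear C') (hC'inv : IsPermInvariant C') (i j k : Fin n) :
    bigC C' (diagSym (bv n i)) (diagSym (bv n j)) (diagSym (bv n k))
      = C' (bv n i) (bv n j) (bv n k) := by
  have hL : bigC C' (diagSym (bv n i)) (diagSym (bv n j)) (diagSym (bv n k))
      = (coA C' - 3 * coB C' + 2 * coC C') * (if i = j ∧ j = k then 1 else 0)
        + (coB C' - coC C') * ((if i = j then 1 else 0) + (if j = k then 1 else 0)
            + (if k = i then 1 else 0))
        + coC C' := by
    show (coA C' - 3 * coB C' + 2 * coC C') *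
        (Matrix.diagonal (bv n i) * Matrix.diagonal (bv n j) * Matrix.diagonal (bv n k)).trace
      + (coB C' - coC C') *
        ((Matrix.diagonal (bv n i) * Matrix.diagonal (bv n j)).trace * (Matrix.diagonal (bv n k)).trace
          + (Matrix.diagonal (bv n j) * Matrix.diagonal (bv n k)).trace * (Matrix.diagonal (bv n i)).trace
          + (Matrix.diagonal (bv n k) * Matrix.diagonal (bv n i)).trace * (Matrix.diagonal (bv n j)).trace)
      + coC C' * ((Matrix.diagonal (bv n i)).trace * (Matrix.diagonal (bv n j)).trace
          * (Matrix.diagonal (bv n k)).trace) = _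
    simp only [Matrix.diagonal_mul_diagonal, Matrix.trace_diagonal, Pi.mul_apply]
    rw [show ∀ f : Fin n → ℝ, ∑ l, (f l) = ∑ l, f l from fun _ => rfl]
    rw [bv_sum3 i j k, bv_sum2 i j, bv_sum2 j k, bv_sum2 k i,
      bv_sum1 i, bv_sum1 j, bv_sum1 k]
    ring
  rw [hL]
  by_cases hij : i = j
  · by_cases hjk : j = k
    · subst hij; subst hjk
      simp only [and_self, if_true]
      rw [T_iii hC'inv i]; ring
    · subst hij
      have hki : k ≠ i := fun h => hjk h.symm
      simp only [hjk, hki, and_false, if_false, if_true, eq_self_iff_true]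
      rw [T_pair hC'inv i k hjk]; ring
  · by_cases hjk : j = k
    · subst hjk
      have hji : j ≠ i := fun h => hij h.symm
      simp only [hij, hji, false_and, if_false, if_true, eq_self_iff_true]
      rw [hC'tri.2.1 (bv n i) (bv n j) (bv n j), hC'tri.2.2 (bv n j) (bv n i) (bv n j),
        T_pair hC'inv j i hji]
      ring
    · by_cases hik : i = k
      · subst hik
        simp only [hij, hjk, false_and, if_false, if_true, eq_self_iff_true]
        rw [hC'tri.2.2 (bv n i) (bv n j) (bv n i), T_pair hC'inv i j hij]
        ring
      · have hki : k ≠ i := fun h => hik h.symm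
        simp only [hij, hjk, hki, false_and, if_false]
        rw [T_dist hC'inv i j k hij hik hjk]; ring

theorem diag_add (a b : Fin n → ℝ) : diagSym (a + b) = diagSym a + diagSym b :=
  Subtype.ext (Matrix.diagonal_add a b).symm

theorem diag_smul (r : ℝ) (a : Fin n → ℝ) : diagSym (r • a) = r • diagSym a :=
  Subtype.ext (Matrix.diagonal_smul r a)

theorem restrict (hC'tri : IsSymTrilinear C') (hC'inv : IsPermInvariant C')
    (a b c : Fin n → ℝ) :
    bigC C' (diagSym a) (diagSym b) (diagSym c) = C' a b c := by
  have hR : IsSymTrilinear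
      (fun a b c : Fin n → ℝ => bigC C' (diagSym a) (diagSym b) (diagSym c)) := by
    refine ⟨fun y z => ⟨fun p q => ?_, fun r p => ?_⟩,
      fun x y z => (bigC_tri C').2.1 _ _ _, fun x y z => (bigC_tri C').2.2 _ _ _⟩
    · show bigC C' (diagSym (p + q)) (diagSym y) (diagSym z)
        = bigC C' (diagSym p) (diagSym y) (diagSym z)
          + bigC C' (diagSym q) (diagSym y) (diagSym z)
      rw [diag_add]; exact ((bigC_tri C').1 _ _).map_add _ _
    · show bigC C' (diagSym (r • p)) (diagSym y) (diagSym z)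
        = r • bigC C' (diagSym p) (diagSym y) (diagSym z)
      rw [diag_smul]; exact ((bigC_tri C').1 _ _).map_smul _ _
  refine (expand hR a b c).trans (Eq.trans ?_ (expand hC'tri a b c).symm)
  exact Finset.sum_congr rfl fun i _ => Finset.sum_congr rfl fun j _ =>
    Finset.sum_congr rfl fun k _ =>
      congrArg (fun t => a i * b j * c k * t) (key hC'tri hC'inv i j k)

end Comb

end Chev

/-- Chevalley restriction in degree 3: restriction to the diagonal subspace is
a linear isomorphism from `O(n)`-invariant symmetric trilinear forms on
`Sym(n,ℝ)` onto `𝔖ₙ`-invariant symmetric trilinear forms on `D ≅ ℝⁿ`;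
equivalently, every invariant symmetric trilinear form downstairs is the
restriction of a unique invariant symmetric trilinear form upstairs. -/
theorem stmt_10 (n : ℕ)
    (C' : (Fin n → ℝ) → (Fin n → ℝ) → (Fin n → ℝ) → ℝ)
    (hC'tri : IsSymTrilinear C') (hC'inv : IsPermInvariant C') :
    ∃! C : {C : SymMat n → SymMat n → SymMat n → ℝ //
              IsSymTrilinear C ∧ IsOInvariant C},
      ∀ a b c : Fin n → ℝ, (C : SymMat n → SymMat n → SymMat n → ℝ)
        (diagSym a) (diagSym b) (diagSym c) = C' a b c := by
  refine ⟨⟨Chev.bigC C', Chev.bigC_tri C', Chev.bigC_inv C'⟩,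
    fun a b c => Chev.restrict hC'tri hC'inv a b c, ?_⟩
  rintro ⟨C₂, hC₂tri, hC₂inv⟩ h₂
  apply Subtype.ext
  show C₂ = Chev.bigC C'
  funext X Y Z
  have hD : IsSymTrilinear (fun X Y Z => C₂ X Y Z - Chev.bigC C' X Y Z) := by
    refine ⟨fun y z => ⟨fun p q => ?_, fun r p => ?_⟩, fun x y z => ?_, fun x y z => ?_⟩
    · show C₂ (p + q) y z - Chev.bigC C' (p + q) y z
        = (C₂ p y z - Chev.bigC C' p y z) + (C₂ q y z - Chev.bigC C' q y z)
      rw [(hC₂tri.1 y z).map_add p q, ((Chev.bigC_tri C').1 y z).map_add p q]; ring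
    · show C₂ (r • p) y z - Chev.bigC C' (r • p) y z
        = r • (C₂ p y z - Chev.bigC C' p y z)
      rw [(hC₂tri.1 y z).map_smul r p, ((Chev.bigC_tri C').1 y z).map_smul r p]
      simp only [smul_eq_mul]; ring
    · show C₂ x y z - Chev.bigC C' x y z = C₂ y x z - Chev.bigC C' y x z
      rw [hC₂tri.2.1 x y z, (Chev.bigC_tri C').2.1 x y z]
    · show C₂ x y z - Chev.bigC C' x y z = C₂ x z y - Chev.bigC C' x z y
      rw [hC₂tri.2.2 x y z, (Chev.bigC_tri C').2.2 x y z]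
  have h₂' : ∀ a b c : Fin n → ℝ,
      C₂ (diagSym a) (diagSym b) (diagSym c) = C' a b c := h₂
  have h0 : ∀ W : SymMat n, C₂ W W W - Chev.bigC C' W W W = 0 := by
    intro W
    obtain ⟨A, d, hA, hW⟩ := Chev.spectral W
    rw [hW, hC₂inv A hA, Chev.bigC_inv C' A hA, h₂' d d d,
      Chev.restrict hC'tri hC'inv d d d]
    ring
  exact sub_eq_zero.mp (Chev.cubic_zero hD h0 X Y Z)
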